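/- arXiv:0901.4392 — 3 statements merged into one kernel-verified Lean document; each statement's English description precedes it below -/
import Mathlib

section
/- Let σ̂_1², …, σ̂_p² be random variables such that each σ̂_ν² is distributed as σ_ν² χ²_{(n)}/n (no assumption on their joint distribution), where σ_1², …, σ_p² > 0 are constants. Fix k ∈ {1,…,p}, let γ > 0 and α_n = γ n^{−1/2}(log n)^{1/2}, and set b(γ) = [γ√3/(4 + 2√3)]². Let σ_{(1)}² ≥ … ≥ σ_{(p)}² and σ̂_{(1)}² ≥ … ≥ σ̂_{(p)}² denote the ordered population and sample variances, I_in = {l : σ_l² ≥ σ_{(k)}²(1 + α_n)}, I_out = {l : σ_l² ≤ σ_{(k)}²(1 − α_n)}, FE = ∪_{l ∈ I_in} {σ̂_l² < σ̂_{(k)}²}, and FI = ∪_{l ∈ I_out} {σ̂_l² ≥ σ̂_{(k)}²}. Then P(FE ∪ FI) ≤ 2pk n^{−b(γ)} + k n^{−(1 − 2α_n) b(γ)}. -/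
/-!
STATEMENT 4 (Johnstone–Lu, Theorem 4): correct selection properties.
If `σ̂_ν² ~ σ_ν² χ²_{(n)}/n` marginally (no joint assumption), `k ∈ {1,…,p}`,
`α_n = γ n^{−1/2}(log n)^{1/2}` and `b(γ) = [γ√3/(4 + 2√3)]²`, then
`P(FE ∪ FI) ≤ 2 p k n^{−b(γ)} + k n^{−(1 − 2α_n) b(γ)}`.
Here `k : Fin p` is the 0-based index, so the integer `k` of the paper is `k.1 + 1`.
-/

open MeasureTheory ProbabilityTheory Filter

noncomputable section

/-- The chi-squared distribution with `n` degrees of freedom: the law of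
`z₁² + ⋯ + z_n²` for i.i.d. standard normal `z_i`. -/
def chiSqMeasure (n : ℕ) : Measure ℝ :=
  Measure.map (fun x : Fin n → ℝ => ∑ i, (x i) ^ 2)
    (Measure.pi fun _ : Fin n => gaussianReal 0 1)

/-- `ordDesc a k` is the `(k+1)`-th largest of the values `a 0, …, a (p-1)`,
i.e. `a_{(k+1)}` in decreasing-order-statistics notation. -/
def ordDesc {p : ℕ} (a : Fin p → ℝ) (k : Fin p) : ℝ := a (Tuple.sort a k.rev)

open Real
open scoped ENNReal NNReal

lemma pdf_smul_exp (t : ℝ) (x : ℝ) : (gaussianPDFReal 0 1 x).toNNReal • rexp (t * x ^ 2)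
      = (√(2*π))⁻¹ * rexp (-(1/2 - t) * x ^ 2) := by
  rw [NNReal.smul_def, smul_eq_mul, Real.coe_toNNReal _ (gaussianPDFReal_nonneg 0 1 x)]
  simp only [gaussianPDFReal, NNReal.coe_one, mul_one, sub_zero]
  rw [mul_assoc, ← Real.exp_add]
  ring_nf

lemma integral_exp_mul_sq_gaussian {t : ℝ} (ht : t < 1/2) :
    ∫ x, rexp (t * x ^ 2) ∂(gaussianReal 0 1) = (1 - 2*t) ^ (-(1:ℝ)/2) := by
  have h2 : (0:ℝ) < 1 - 2*t := by linarith
  rw [gaussianReal_of_var_ne_zero 0 one_ne_zero, gaussianPDF_def]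
  have hmeas : Measurable fun x => (gaussianPDFReal 0 1 x).toNNReal :=
    (measurable_gaussianPDFReal 0 1).real_toNNReal
  have h : (fun x => ENNReal.ofReal (gaussianPDFReal 0 1 x))
      = fun x => ((gaussianPDFReal 0 1 x).toNNReal : ℝ≥0∞) := rfl
  rw [h, integral_withDensity_eq_integral_smul hmeas]
  simp_rw [pdf_smul_exp t]
  rw [integral_const_mul, integral_gaussian]
  have hs : √(π / (1/2 - t)) = √(2*π) / √(1-2*t) := by
    rw [show π/(1/2-t) = (2*π)/(1-2*t) by field_simp, Real.sqrt_div (by positivity)]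
  rw [hs, neg_div, Real.rpow_neg h2.le, ← Real.sqrt_eq_rpow]
  have hne : √(2*π) ≠ 0 := by positivity
  field_simp

lemma integrable_exp_mul_sq_gaussian {t : ℝ} (ht : t < 1/2) :
    Integrable (fun x => rexp (t * x ^ 2)) (gaussianReal 0 1) := by
  have h2 : (0:ℝ) < 1/2 - t := by linarith
  rw [gaussianReal_of_var_ne_zero 0 one_ne_zero, gaussianPDF_def]
  have hmeas : Measurable fun x => (gaussianPDFReal 0 1 x).toNNReal :=
    (measurable_gaussianPDFReal 0 1).real_toNNReal
  have h : (fun x => ENNReal.ofReal (gaussianPDFReal 0 1 x))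
      = fun x => ((gaussianPDFReal 0 1 x).toNNReal : ℝ≥0∞) := rfl
  rw [h, integrable_withDensity_iff_integrable_smul hmeas]
  simp_rw [pdf_smul_exp t]
  exact (integrable_exp_neg_mul_sq h2).const_mul _

lemma measurable_sumsq (n : ℕ) : Measurable (fun x : Fin n → ℝ => ∑ i, (x i) ^ 2) :=
  Finset.measurable_sum _ (fun i _ => (measurable_pi_apply i).pow_const 2)

instance chiSq_prob (n : ℕ) : IsProbabilityMeasure (chiSqMeasure n) :=
  Measure.isProbabilityMeasure_map (measurable_sumsq n).aemeasurable

lemma exp_comp_sumsq (n : ℕ) (t : ℝ) (x : Fin n → ℝ) :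
    rexp (t * ∑ i, (x i)^2) = ∏ i, rexp (t * (x i)^2) := by
  rw [← Real.exp_sum, Finset.mul_sum]


lemma integrable_exp_chiSq (n : ℕ) {t : ℝ} (ht : t < 1/2) :
    Integrable (fun x => rexp (t * x)) (chiSqMeasure n) := by
  rw [chiSqMeasure, integrable_map_measure
    (Continuous.aestronglyMeasurable (by continuity)) (measurable_sumsq n).aemeasurable]
  have h : ((fun x => rexp (t * x)) ∘ fun x : Fin n → ℝ => ∑ i, (x i) ^ 2)
      = fun x : Fin n → ℝ => ∏ i, rexp (t * (x i)^2) := by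
    ext x; exact exp_comp_sumsq n t x
  rw [h]
  letI : MeasureSpace ℝ := ⟨gaussianReal 0 1⟩
  haveI : IsFiniteMeasure (volume : Measure ℝ) :=
    inferInstanceAs (IsFiniteMeasure (gaussianReal 0 1))
  have hpi : (Measure.pi fun _ : Fin n => gaussianReal 0 1) = (volume : Measure (Fin n → ℝ)) := by
    rfl
  rw [hpi]
  exact Integrable.fintype_prod (f := fun (_ : Fin n) x => rexp (t * x^2))
    (fun i => integrable_exp_mul_sq_gaussian ht)

lemma integral_exp_chiSq (n : ℕ) {t : ℝ} (ht : t < 1/2) :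
    ∫ x, rexp (t * x) ∂(chiSqMeasure n) = (1 - 2*t) ^ (-(n:ℝ)/2) := by
  have h2 : (0:ℝ) < 1 - 2*t := by linarith
  rw [chiSqMeasure, integral_map (measurable_sumsq n).aemeasurable
    (Continuous.aestronglyMeasurable (by continuity))]
  simp_rw [exp_comp_sumsq n t]
  letI : MeasureSpace ℝ := ⟨gaussianReal 0 1⟩
  haveI : IsFiniteMeasure (volume : Measure ℝ) :=
    inferInstanceAs (IsFiniteMeasure (gaussianReal 0 1))
  have hpi : (Measure.pi fun _ : Fin n => gaussianReal 0 1) = (volume : Measure (Fin n → ℝ)) := by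
    rfl
  rw [hpi]
  rw [show (volume : Measure (Fin n → ℝ)) = Measure.pi fun _ => volume from rfl, integral_fintype_prod_eq_prod (f := fun (_ : Fin n) x => rexp (t * x^2))]
  have h1 : ∫ (x : ℝ), rexp (t * x ^ 2) = (1 - 2*t) ^ (-(1:ℝ)/2) :=
    integral_exp_mul_sq_gaussian ht
  rw [Finset.prod_const, h1, Finset.card_univ, Fintype.card_fin,
    ← Real.rpow_natCast ((1-2*t) ^ (-(1:ℝ)/2)) n, ← Real.rpow_mul h2.le]
  ring_nf

lemma log_one_sub_le {x : ℝ} (h0 : 0 ≤ x) (h1 : x < 1) :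
    Real.log (1 - x) ≤ -x - x^2/2 := by
  set g : ℝ → ℝ := fun y => -y - y^2/2 - Real.log (1 - y) with hg
  have hd : ∀ y ∈ Set.Ico (0:ℝ) 1, HasDerivAt g (y^2/(1-y)) y := by
    intro y hy
    have hne : (1:ℝ) - y ≠ 0 := by simp at hy; nlinarith [hy.1, hy.2]
    have hlog : HasDerivAt (fun z : ℝ => Real.log (1 - z)) ((1-y)⁻¹ * (-1)) y :=
      (Real.hasDerivAt_log hne).comp y ((hasDerivAt_id y).const_sub 1)
    have hpoly : HasDerivAt (fun z : ℝ => -z - z^2/2) (-1 - y) y := by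
      have h := ((hasDerivAt_id y).neg).sub ((hasDerivAt_pow 2 y).div_const 2)
      convert h using 1 <;> first | rfl | norm_num
    have := hpoly.sub hlog
    convert this using 1 <;> try rfl
    have h1y : (0:ℝ) < 1 - y := by simp at hy; nlinarith [hy.1, hy.2]
    field_simp
    ring
  have hmono : MonotoneOn g (Set.Ico (0:ℝ) 1) := by
    apply monotoneOn_of_deriv_nonneg (convex_Ico 0 1)
    · exact fun y hy => (hd y hy).continuousAt.continuousWithinAt
    · intro y hy
      rw [interior_Ico] at hy
      exact ((hd y (Set.mem_Ico_of_Ioo hy)).differentiableAt).differentiableWithinAt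
    · intro y hy
      rw [interior_Ico] at hy
      rw [(hd y (Set.mem_Ico_of_Ioo hy)).deriv]
      have h2 : (0:ℝ) < 1 - y := by nlinarith [hy.1, hy.2]
      exact div_nonneg (by positivity) h2.le
  have h := hmono (Set.mem_Ico.2 ⟨le_refl 0, one_pos⟩) (Set.mem_Ico.2 ⟨h0, h1⟩) h0
  simp [hg] at h
  linarith
lemma log_one_add_le {x : ℝ} (h0 : 0 ≤ x) :
    Real.log (1 + x) ≤ x - x^2/2 + x^3/3 := by
  set g : ℝ → ℝ := fun y => y - y^2/2 + y^3/3 - Real.log (1 + y) with hg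
  have hd : ∀ y ∈ Set.Ici (0:ℝ), HasDerivAt g (y^3/(1+y)) y := by
    intro y hy
    simp at hy
    have hne : (1:ℝ) + y ≠ 0 := by positivity
    have hlog : HasDerivAt (fun z : ℝ => Real.log (1 + z)) ((1+y)⁻¹ * 1) y :=
      (Real.hasDerivAt_log hne).comp y ((hasDerivAt_id y).const_add 1)
    have hpoly : HasDerivAt (fun z : ℝ => z - z^2/2 + z^3/3) (1 - y + y^2) y := by
      have h := (((hasDerivAt_id y)).sub ((hasDerivAt_pow 2 y).div_const 2)).add
        ((hasDerivAt_pow 3 y).div_const 3)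
      convert h using 1 <;> first | rfl | norm_num
    have := hpoly.sub hlog
    convert this using 1 <;> try rfl
    have h1y : (0:ℝ) < 1 + y := by positivity
    field_simp
    ring
  have hmono : MonotoneOn g (Set.Ici (0:ℝ)) := by
    apply monotoneOn_of_deriv_nonneg (convex_Ici 0)
    · exact fun y hy => (hd y hy).continuousAt.continuousWithinAt
    · intro y hy
      rw [interior_Ici] at hy
      exact ((hd y (Set.mem_Ici.2 (le_of_lt hy))).differentiableAt).differentiableWithinAt
    · intro y hy
      rw [interior_Ici] at hy
      rw [(hd y (Set.mem_Ici.2 (le_of_lt hy))).deriv]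
      have hy0 : (0:ℝ) < y := hy
      exact div_nonneg (by positivity) (by linarith)
  have h := hmono (Set.mem_Ici.2 (le_refl 0)) (Set.mem_Ici.2 h0) h0
  simp [hg] at h
  linarith

lemma chiSq_upper_tail (n : ℕ) {ε : ℝ} (h0 : 0 ≤ ε) (h1 : ε ≤ 1/3) :
    chiSqMeasure n {x | (n:ℝ)*(1+ε) ≤ x} ≤ ENNReal.ofReal (rexp (-(3*n*ε^2/16))) := by
  have hε1 : (0:ℝ) < 1 + ε := by linarith
  set t := ε/(2*(1+ε)) with htdef
  have ht0 : 0 ≤ t := by positivity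
  have ht2 : t < 1/2 := by rw [htdef, div_lt_iff₀ (by positivity)]; linarith
  have hint := integrable_exp_chiSq n ht2
  have h := measure_ge_le_exp_mul_mgf (X := id) (μ := chiSqMeasure n) ((n:ℝ)*(1+ε)) ht0 hint
  have hmgf : mgf id (chiSqMeasure n) t = (1 - 2*t)^(-(n:ℝ)/2) := by
    rw [mgf]; exact integral_exp_chiSq n ht2
  rw [hmgf] at h
  have h1m : 1 - 2*t = (1+ε)⁻¹ := by rw [htdef]; field_simp; ring
  have he1 : rexp (-t * ((n:ℝ)*(1+ε))) = rexp (-((n:ℝ)*ε/2)) := by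
    congr 1; rw [htdef]; field_simp
  have he2 : (1 - 2*t)^(-(n:ℝ)/2) = rexp (Real.log (1+ε) * ((n:ℝ)/2)) := by
    rw [h1m, Real.inv_rpow hε1.le, ← Real.rpow_neg hε1.le, neg_div, neg_neg,
      Real.rpow_def_of_pos hε1]
  have hlog := log_one_add_le h0
  have hbound : rexp (-t * ((n:ℝ)*(1+ε))) * (1 - 2*t)^(-(n:ℝ)/2)
      ≤ rexp (-(3*n*ε^2/16)) := by
    rw [he1, he2, ← Real.exp_add]
    apply Real.exp_le_exp.2
    have hn : (0:ℝ) ≤ (n:ℝ)/2 := by positivity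
    have h2 := mul_le_mul_of_nonneg_right hlog hn
    nlinarith [mul_nonneg (mul_nonneg (Nat.cast_nonneg n : (0:ℝ) ≤ n) (sq_nonneg ε))
      (by linarith : (0:ℝ) ≤ 3/8 - ε)]
  refine (ENNReal.le_ofReal_iff_toReal_le (measure_ne_top _ _) (Real.exp_pos _).le).2 ?_
  calc (chiSqMeasure n {x | (n:ℝ)*(1+ε) ≤ x}).toReal
      = (chiSqMeasure n {ω | (n:ℝ)*(1+ε) ≤ id ω}).toReal := rfl
    _ ≤ _ := h.trans hbound

lemma chiSq_lower_tail (n : ℕ) {δ : ℝ} (h0 : 0 ≤ δ) (h1 : δ < 1) :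
    chiSqMeasure n {x | x ≤ (n:ℝ)*(1-δ)} ≤ ENNReal.ofReal (rexp (-(n*δ^2/4))) := by
  have hδ1 : (0:ℝ) < 1 - δ := by linarith
  set t := -δ/(2*(1-δ)) with htdef
  have ht0 : t ≤ 0 := by
    rw [htdef]; apply div_nonpos_of_nonpos_of_nonneg <;> [linarith; positivity]
  have ht2 : t < 1/2 := lt_of_le_of_lt ht0 (by norm_num)
  have hint := integrable_exp_chiSq n ht2
  have h := measure_le_le_exp_mul_mgf (X := id) (μ := chiSqMeasure n) ((n:ℝ)*(1-δ)) ht0 hint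
  have hmgf : mgf id (chiSqMeasure n) t = (1 - 2*t)^(-(n:ℝ)/2) := by
    rw [mgf]; exact integral_exp_chiSq n ht2
  rw [hmgf] at h
  have h1m : 1 - 2*t = (1-δ)⁻¹ := by rw [htdef]; field_simp; ring
  have he1 : rexp (-t * ((n:ℝ)*(1-δ))) = rexp ((n:ℝ)*δ/2) := by
    congr 1; rw [htdef]; field_simp
  have he2 : (1 - 2*t)^(-(n:ℝ)/2) = rexp (Real.log (1-δ) * ((n:ℝ)/2)) := by
    rw [h1m, Real.inv_rpow hδ1.le, ← Real.rpow_neg hδ1.le, neg_div, neg_neg,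
      Real.rpow_def_of_pos hδ1]
  have hlog := log_one_sub_le h0 h1
  have hbound : rexp (-t * ((n:ℝ)*(1-δ))) * (1 - 2*t)^(-(n:ℝ)/2)
      ≤ rexp (-(n*δ^2/4)) := by
    rw [he1, he2, ← Real.exp_add]
    apply Real.exp_le_exp.2
    have hn : (0:ℝ) ≤ (n:ℝ)/2 := by positivity
    have h2 := mul_le_mul_of_nonneg_right hlog hn
    nlinarith
  refine (ENNReal.le_ofReal_iff_toReal_le (measure_ne_top _ _) (Real.exp_pos _).le).2 ?_
  calc (chiSqMeasure n {x | x ≤ (n:ℝ)*(1-δ)}).toReal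
      = (chiSqMeasure n {ω | id ω ≤ (n:ℝ)*(1-δ)}).toReal := rfl
    _ ≤ _ := h.trans hbound

lemma ordDesc_exists_ge {p : ℕ} (a : Fin p → ℝ) (k : Fin p) :
    ∃ S : Finset (Fin p), S.card = k.1 + 1 ∧ ∀ j ∈ S, ordDesc a k ≤ a j := by
  refine ⟨(Finset.Ici k.rev).image (Tuple.sort a), ?_, ?_⟩
  · rw [Finset.card_image_of_injective _ (Tuple.sort a).injective, Fin.card_Ici,
      Fin.val_rev]
    omega
  · intro j hj
    obtain ⟨i, hi, rfl⟩ := Finset.mem_image.1 hj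
    exact Tuple.monotone_sort a (Finset.mem_Ici.1 hi)

lemma ordDesc_exists_le {p : ℕ} (a : Fin p → ℝ) (k : Fin p) :
    ∃ S : Finset (Fin p), S.card = p - k.1 ∧ ∀ j ∈ S, a j ≤ ordDesc a k := by
  refine ⟨(Finset.Iic k.rev).image (Tuple.sort a), ?_, ?_⟩
  · rw [Finset.card_image_of_injective _ (Tuple.sort a).injective, Fin.card_Iic,
      Fin.val_rev]
    omega
  · intro j hj
    obtain ⟨i, hi, rfl⟩ := Finset.mem_image.1 hj
    exact Tuple.monotone_sort a (Finset.mem_Iic.1 hi)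

lemma finset_inter_nonempty {p : ℕ} (S T : Finset (Fin p)) (h : p < S.card + T.card) :
    ∃ j, j ∈ S ∧ j ∈ T := by
  by_contra hc
  push_neg at hc
  have hd : Disjoint S T := Finset.disjoint_left.2 hc
  have := Finset.card_le_univ (S ∪ T)
  rw [Finset.card_union_of_disjoint hd] at this
  simp [Fintype.card_fin] at this
  omega

lemma aemeasurable_of_map_chiSq {Ω : Type*} [MeasurableSpace Ω] {P : Measure Ω}
    {n : ℕ} {f : Ω → ℝ} (hd : Measure.map f P = chiSqMeasure n) : AEMeasurable f P := by
  by_contra hm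
  rw [Measure.map_of_not_aemeasurable hm] at hd
  exact (IsProbabilityMeasure.ne_zero (chiSqMeasure n)) hd.symm

lemma event_lower {Ω : Type*} [MeasurableSpace Ω] (P : Measure Ω) (n : ℕ)
    {σ2 : ℝ} (hσ2 : 0 < σ2) {X : Ω → ℝ}
    (hd : Measure.map (fun ω => (n:ℝ) * X ω / σ2) P = chiSqMeasure n)
    {c δv : ℝ} (h0 : 0 ≤ δv) (h1 : δv < 1) (hc : c ≤ σ2*(1-δv)) :
    P {ω | X ω < c} ≤ ENNReal.ofReal (rexp (-(n*δv^2/4))) := by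
  have haem := aemeasurable_of_map_chiSq hd
  have hsub : {ω | X ω < c} ⊆ {ω | (n:ℝ)*X ω/σ2 ≤ (n:ℝ)*(1-δv)} := by
    intro ω hω
    simp only [Set.mem_setOf_eq] at *
    rw [div_le_iff₀ hσ2]
    have hn : (0:ℝ) ≤ (n:ℝ) := Nat.cast_nonneg n
    nlinarith [mul_le_mul_of_nonneg_left hω.le hn, mul_le_mul_of_nonneg_left hc hn]
  calc P {ω | X ω < c} ≤ P {ω | (n:ℝ)*X ω/σ2 ≤ (n:ℝ)*(1-δv)} := measure_mono hsub
    _ = chiSqMeasure n {y | y ≤ (n:ℝ)*(1-δv)} := by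
        rw [← hd, Measure.map_apply_of_aemeasurable haem (show MeasurableSet {y : ℝ | y ≤ (n:ℝ)*(1-δv)} from measurableSet_Iic)]
        rfl
    _ ≤ _ := chiSq_lower_tail n h0 h1

lemma event_upper {Ω : Type*} [MeasurableSpace Ω] (P : Measure Ω) (n : ℕ)
    {σ2 : ℝ} (hσ2 : 0 < σ2) {X : Ω → ℝ}
    (hd : Measure.map (fun ω => (n:ℝ) * X ω / σ2) P = chiSqMeasure n)
    {c εv : ℝ} (h0 : 0 ≤ εv) (h1 : εv ≤ 1/3) (hc : σ2*(1+εv) ≤ c) :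
    P {ω | c ≤ X ω} ≤ ENNReal.ofReal (rexp (-(3*n*εv^2/16))) := by
  have haem := aemeasurable_of_map_chiSq hd
  have hsub : {ω | c ≤ X ω} ⊆ {ω | (n:ℝ)*(1+εv) ≤ (n:ℝ)*X ω/σ2} := by
    intro ω hω
    simp only [Set.mem_setOf_eq] at *
    rw [le_div_iff₀ hσ2]
    have hn : (0:ℝ) ≤ (n:ℝ) := Nat.cast_nonneg n
    nlinarith [mul_le_mul_of_nonneg_left hω hn, mul_le_mul_of_nonneg_left hc hn]
  calc P {ω | c ≤ X ω} ≤ P {ω | (n:ℝ)*(1+εv) ≤ (n:ℝ)*X ω/σ2} := measure_mono hsub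
    _ = chiSqMeasure n {y | (n:ℝ)*(1+εv) ≤ y} := by
        rw [← hd, Measure.map_apply_of_aemeasurable haem (show MeasurableSet {y : ℝ | (n:ℝ)*(1+εv) ≤ y} from measurableSet_Ici)]
        rfl
    _ ≤ _ := chiSq_upper_tail n h0 h1

lemma measure_biUnion_le_card_smul {Ω ι : Type*} [MeasurableSpace Ω] (P : Measure Ω)
    (D : Finset ι) (E : ι → Set Ω) (u : ℝ≥0∞) (h : ∀ j ∈ D, P (E j) ≤ u) :
    P (⋃ j ∈ D, E j) ≤ D.card • u := by
  refine le_trans (measure_biUnion_finset_le D E) ?_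
  rw [← Finset.sum_const]
  exact Finset.sum_le_sum h

lemma smul_ofReal_le (m : ℕ) {x c : ℝ} (hx : 0 ≤ x) (h : (m:ℝ) ≤ c) :
    m • ENNReal.ofReal x ≤ ENNReal.ofReal (c*x) := by
  rw [nsmul_eq_mul, ← ENNReal.ofReal_natCast m, ← ENNReal.ofReal_mul (Nat.cast_nonneg m)]
  exact ENNReal.ofReal_le_ofReal (mul_le_mul_of_nonneg_right h hx)

set_option maxHeartbeats 1000000 in
theorem correct_selection
    {Ω : Type*} [MeasurableSpace Ω] (P : Measure Ω) [IsProbabilityMeasure P]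
    (n p : ℕ) (hn : 1 ≤ n)
    -- population variances `σ_ν² > 0`
    (σsq : Fin p → ℝ) (hσsq : ∀ ν, 0 < σsq ν)
    -- sample variances, each marginally distributed as `σ_ν² χ²_{(n)}/n`
    (σhat : Fin p → Ω → ℝ)
    (hdist : ∀ ν, Measure.map (fun ω => (n : ℝ) * σhat ν ω / σsq ν) P = chiSqMeasure n)
    (k : Fin p) (γ : ℝ) (hγ : 0 < γ)
    (α b : ℝ)
    (hα : α = γ * (n : ℝ) ^ (-(1 : ℝ) / 2) * Real.log n ^ ((1 : ℝ) / 2))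
    (hb : b = (γ * Real.sqrt 3 / (4 + 2 * Real.sqrt 3)) ^ 2)
    -- `FE`: some variable with `σ_l² ≥ σ_{(k)}²(1 + α_n)` is excluded
    (FE : Set Ω)
    (hFE : FE = {ω | ∃ l : Fin p, ordDesc σsq k * (1 + α) ≤ σsq l ∧
      σhat l ω < ordDesc (fun ν => σhat ν ω) k})
    -- `FI`: some variable with `σ_l² ≤ σ_{(k)}²(1 − α_n)` is included
    (FI : Set Ω)
    (hFI : FI = {ω | ∃ l : Fin p, σsq l ≤ ordDesc σsq k * (1 - α) ∧
      ordDesc (fun ν => σhat ν ω) k ≤ σhat l ω}) :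
    P (FE ∪ FI) ≤ ENNReal.ofReal
      (2 * p * ((k : ℕ) + 1) * (n : ℝ) ^ (-b) +
        ((k : ℕ) + 1) * (n : ℝ) ^ (-(1 - 2 * α) * b)) := by
  classical
  have hkp : k.1 < p := k.isLt
  have hp : 0 < p := k.pos
  have hs3 : (0:ℝ) < Real.sqrt 3 := Real.sqrt_pos.2 (by norm_num)
  have hs3sq : Real.sqrt 3 ^ 2 = 3 := Real.sq_sqrt (by norm_num)
  set s3 := Real.sqrt 3 with hs3def
  have hs31 : (1:ℝ) ≤ s3 := by nlinarith [hs3, hs3sq]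
  have hk1R : (1:ℝ) ≤ (k.1:ℝ) + 1 := by
    have h0 : (0:ℝ) ≤ (k.1:ℝ) := Nat.cast_nonneg _
    linarith only [h0]
  have hpR : (1:ℝ) ≤ (p:ℝ) := by exact_mod_cast hp
  have hkpR : (k.1:ℝ) + 1 ≤ (p:ℝ) := by exact_mod_cast hkp
  have hb0 : 0 < b := by
    rw [hb]
    have h1 : 0 < γ * s3 / (4 + 2*s3) := by positivity
    positivity
  rcases le_or_gt 1 (2*p*((k:ℕ)+1)*(n:ℝ)^(-b) + ((k:ℕ)+1)*(n:ℝ)^(-(1-2*α)*b)) with hcase | hcase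
  · calc P (FE ∪ FI) ≤ 1 := prob_le_one
      _ ≤ _ := ENNReal.one_le_ofReal.2 hcase
  have hn1 : (1:ℝ) ≤ (n:ℝ) := by exact_mod_cast hn
  have hnpos : (0:ℝ) < n := by linarith only [hn1]
  have hUnn : (0:ℝ) ≤ (n:ℝ)^(-b) := Real.rpow_nonneg hnpos.le _
  have hLnn : (0:ℝ) ≤ (n:ℝ)^(-(1-2*α)*b) := Real.rpow_nonneg hnpos.le _
  -- n ≥ 2
  have hn2 : 2 ≤ n := by
    by_contra h
    have hn1' : n = 1 := by omega
    subst hn1'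
    have hα0 : α = 0 := by rw [hα]; norm_num
    rw [hα0] at hcase
    norm_num at hcase
    have h3 : (1:ℝ) ≤ (p:ℝ)*((k.1:ℝ)+1) := by
      have h4 := mul_le_mul hpR hk1R (by norm_num) (by linarith only [hpR])
      linarith only [h4]
    linarith only [h3, hcase, hk1R]
  have hlogn : 0 < Real.log n := Real.log_pos (by exact_mod_cast hn2)
  have hα0 : 0 < α := by
    rw [hα]
    exact mul_pos (mul_pos hγ (Real.rpow_pos_of_pos hnpos _)) (Real.rpow_pos_of_pos hlogn _)
  have hα12 : α < 1/2 := by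
    by_contra h
    push_neg at h
    have hexp : 0 ≤ -(1-2*α)*b := by nlinarith [h, hb0]
    have h1 : (1:ℝ) ≤ (n:ℝ)^(-(1-2*α)*b) := by
      nth_rewrite 1 [← Real.rpow_zero (n:ℝ)]
      exact Real.rpow_le_rpow_of_exponent_le hn1 hexp
    have h2 : (0:ℝ) ≤ 2*(p:ℝ)*((k.1:ℝ)+1)*(n:ℝ)^(-b) := by positivity
    have h3 : (1:ℝ) ≤ ((k.1:ℝ)+1)*((n:ℝ)^(-(1-2*α)*b)) := by
      have h4 := mul_le_mul hk1R h1 (by norm_num) (by linarith only [hk1R])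
      linarith only [h4]
    linarith only [h2, h3, hcase]
  -- parameters
  set τ := ordDesc σsq k with hτdef
  have hτ : 0 < τ := hσsq _
  obtain ⟨ε, hεdef⟩ : ∃ x : ℝ, x = 2*α/(2+s3) := ⟨_, rfl⟩
  obtain ⟨δ, hδdef⟩ : ∃ x : ℝ, x = s3*α/(2+s3) := ⟨_, rfl⟩
  have h2s3 : (0:ℝ) < 2+s3 := by linarith only [hs3]
  have hε0 : 0 < ε := by
    rw [hεdef]; exact div_pos (by linarith only [hα0]) h2s3
  have hδ0 : 0 < δ := by
    rw [hδdef]; exact div_pos (mul_pos hs3 hα0) h2s3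
  have hεδ : ε + δ = α := by
    rw [hεdef, hδdef]
    field_simp
  have hδα : δ < α := by linarith only [hεδ, hε0]
  have hεα : ε < α := by linarith only [hεδ, hδ0]
  have hε13 : ε ≤ 1/3 := by
    rw [hεdef, div_le_iff₀ h2s3]
    linarith only [hα12, hs31]
  have hδ12 : δ < 1/2 := by linarith only [hδα, hα12]
  obtain ⟨δ1, hδ1def⟩ : ∃ x : ℝ, x = δ/(1+α) := ⟨_, rfl⟩
  have hδ10 : 0 ≤ δ1 := by
    rw [hδ1def]; exact le_of_lt (div_pos hδ0 (by linarith only [hα0]))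
  have hδ11 : δ1 < 1 := by
    rw [hδ1def, div_lt_one (by linarith only [hα0])]
    linarith only [hδα, hα0, hδ12]
  -- numeric identities
  have hnα : (n:ℝ)*α^2 = γ^2 * Real.log n := by
    rw [hα]
    have h1 : ((n:ℝ) ^ (-(1:ℝ)/2))^2 = (n:ℝ)⁻¹ := by
      rw [← Real.rpow_natCast ((n:ℝ) ^ (-(1:ℝ)/2)) 2, ← Real.rpow_mul hnpos.le,
        ← Real.rpow_neg_one (n:ℝ)]
      congr 1
      norm_num
    have h2 : (Real.log n ^ ((1:ℝ)/2))^2 = Real.log n := by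
      rw [← Real.rpow_natCast (Real.log (n:ℝ) ^ ((1:ℝ)/2)) 2, ← Real.rpow_mul hlogn.le]
      norm_num
    rw [mul_pow, mul_pow, h1, h2]
    field_simp
  have hδsq : δ^2 = 3*α^2/(2+s3)^2 := by
    rw [hδdef, div_pow, mul_pow, hs3sq]
  have hεsq : ε^2 = 4*α^2/(2+s3)^2 := by
    rw [hεdef, div_pow]
    ring
  have hblog : b*Real.log n = 3*((n:ℝ)*α^2)/(4*(2+s3)^2) := by
    rw [hb, hnα]
    have h44 : ((4:ℝ) + 2*s3)^2 = 4*(2+s3)^2 := by ring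
    rw [div_pow, mul_pow, hs3sq, h44]
    field_simp
  have hUb : rexp (-(3*(n:ℝ)*ε^2/16)) = (n:ℝ)^(-b) := by
    rw [Real.rpow_def_of_pos hnpos]
    congr 1
    have h1 : 3*(n:ℝ)*ε^2/16 = b*Real.log n := by
      rw [hblog, hεsq]
      field_simp
      ring
    rw [h1]
    ring
  have hU4 : rexp (-((n:ℝ)*δ^2/4)) = (n:ℝ)^(-b) := by
    rw [Real.rpow_def_of_pos hnpos]
    congr 1
    have h1 : (n:ℝ)*δ^2/4 = b*Real.log n := by
      rw [hblog, hδsq]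
      field_simp
    rw [h1]
    ring
  have hL : rexp (-((n:ℝ)*δ1^2/4)) ≤ (n:ℝ)^(-(1-2*α)*b) := by
    rw [Real.rpow_def_of_pos hnpos]
    apply Real.exp_le_exp.2
    have k1 : (n:ℝ)*δ1^2/4 * (1+α)^2 = b*Real.log n := by
      rw [hδ1def, hblog, div_pow, hδsq]
      field_simp
    have k2 : (1-2*α)*(1+α)^2 ≤ 1 := by
      have e1 : (1-2*α)*(1+α)^2 = 1 - α^2*(3+2*α) := by ring
      have e2 : 0 ≤ α^2*(3+2*α) := by positivity
      linarith only [e1, e2]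
    have k3 : 0 ≤ (n:ℝ)*δ1^2/4 := by positivity
    have goal2 : (1-2*α)*(b*Real.log n) ≤ (n:ℝ)*δ1^2/4 := by
      calc (1-2*α)*(b*Real.log n) = ((1-2*α)*(1+α)^2) * ((n:ℝ)*δ1^2/4) := by
            rw [← k1]; ring
        _ ≤ 1 * ((n:ℝ)*δ1^2/4) := mul_le_mul_of_nonneg_right k2 k3
        _ = (n:ℝ)*δ1^2/4 := one_mul _
    linarith only [goal2]
  -- order statistics
  obtain ⟨T, hTcard, hT⟩ := ordDesc_exists_le σsq k
  obtain ⟨S, hScard, hS⟩ := ordDesc_exists_ge σsq k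
  set A := Finset.univ.filter (fun l => τ*(1+α) ≤ σsq l) with hAdef
  set C := Finset.univ.filter (fun l => σsq l ≤ τ*(1-α)) with hCdef
  set B := Finset.univ.filter (fun j => σsq j ≤ τ) with hBdef
  have hAcard : A.card ≤ k.1 := by
    have hdisj : Disjoint A T := by
      rw [Finset.disjoint_left]
      intro j hj hjT
      have h1 := (Finset.mem_filter.1 hj).2
      have h2 := hT j hjT
      have h3 := mul_pos hτ hα0
      have h4 : τ*(1+α) = τ + τ*α := by ring
      linarith only [h1, h2, h3, h4]
    have h3 := Finset.card_le_univ (A ∪ T)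
    rw [Finset.card_union_of_disjoint hdisj, hTcard] at h3
    simp only [Finset.card_univ, Fintype.card_fin] at h3
    omega
  have hBcard : B.card ≤ p := by
    simpa using Finset.card_le_univ B
  have hCcard : C.card ≤ p := by
    simpa using Finset.card_le_univ C
  -- inclusions
  have hFEsub : FE ⊆ (⋃ l ∈ A, {ω | σhat l ω < τ*(1+ε)}) ∪
      (⋃ j ∈ B, {ω | τ*(1+ε) ≤ σhat j ω}) := by
    rw [hFE]
    rintro ω ⟨l, hl1, hl2⟩
    have hlA : l ∈ A := Finset.mem_filter.2 ⟨Finset.mem_univ _, hl1⟩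
    by_cases hc1 : σhat l ω < τ*(1+ε)
    · left
      simp only [Set.mem_iUnion, Set.mem_setOf_eq]
      exact ⟨l, hlA, hc1⟩
    · right
      push_neg at hc1
      obtain ⟨S1, hS1card, hS1⟩ := ordDesc_exists_ge (fun ν => σhat ν ω) k
      obtain ⟨j, hjS1, hjT⟩ := finset_inter_nonempty S1 T (by rw [hS1card, hTcard]; omega)
      have hj1 : ordDesc (fun ν => σhat ν ω) k ≤ σhat j ω := hS1 j hjS1
      have hjB : j ∈ B := Finset.mem_filter.2 ⟨Finset.mem_univ _, hT j hjT⟩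
      simp only [Set.mem_iUnion, Set.mem_setOf_eq]
      exact ⟨j, hjB, by linarith only [hc1, hl2, hj1]⟩
  have hFIsub : FI ⊆ (⋃ l ∈ C, {ω | τ*(1-δ) ≤ σhat l ω}) ∪
      (⋃ j ∈ S, {ω | σhat j ω < τ*(1-δ)}) := by
    rw [hFI]
    rintro ω ⟨l, hl1, hl2⟩
    have hlC : l ∈ C := Finset.mem_filter.2 ⟨Finset.mem_univ _, hl1⟩
    by_cases hc1 : τ*(1-δ) ≤ σhat l ω
    · left
      simp only [Set.mem_iUnion, Set.mem_setOf_eq]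
      exact ⟨l, hlC, hc1⟩
    · right
      push_neg at hc1
      obtain ⟨T1, hT1card, hT1⟩ := ordDesc_exists_le (fun ν => σhat ν ω) k
      obtain ⟨j, hjS, hjT1⟩ := finset_inter_nonempty S T1 (by rw [hScard, hT1card]; omega)
      have hj1 : σhat j ω ≤ ordDesc (fun ν => σhat ν ω) k := hT1 j hjT1
      simp only [Set.mem_iUnion, Set.mem_setOf_eq]
      exact ⟨j, hjS, by linarith only [hj1, hl2, hc1]⟩
  -- per-term bounds
  set EU := ENNReal.ofReal ((n:ℝ)^(-b)) with hEUdef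
  set EL := ENNReal.ofReal ((n:ℝ)^(-(1-2*α)*b)) with hELdef
  have hbA : ∀ l ∈ A, P {ω | σhat l ω < τ*(1+ε)} ≤ EL := by
    intro l hl
    have hl1 := (Finset.mem_filter.1 hl).2
    refine le_trans (event_lower P n (hσsq l) (hdist l) hδ10 hδ11 ?_) ?_
    · have h1α : (1:ℝ)+α ≠ 0 := by
        have : (0:ℝ) < 1+α := by linarith only [hα0]
        exact this.ne'
      have hc : (1+α)*δ1 = δ := by
        rw [hδ1def]
        field_simp
      have key : (1+α)*(1-δ1) = 1+ε := by
        rw [mul_sub, mul_one, hc]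
        linarith only [hεδ]
      have h2 := mul_le_mul_of_nonneg_right hl1 (by linarith only [hδ11] : (0:ℝ) ≤ 1-δ1)
      calc τ*(1+ε) = τ*(1+α)*(1-δ1) := by rw [mul_assoc, key]
        _ ≤ σsq l*(1-δ1) := h2
    · rw [hELdef]
      exact ENNReal.ofReal_le_ofReal hL
  have hbB : ∀ j ∈ B, P {ω | τ*(1+ε) ≤ σhat j ω} ≤ EU := by
    intro j hj
    have hj1 := (Finset.mem_filter.1 hj).2
    refine le_trans (event_upper P n (hσsq j) (hdist j) hε0.le hε13 ?_) ?_
    · exact mul_le_mul_of_nonneg_right hj1 (by linarith only [hε0])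
    · rw [hEUdef, hUb]
  have hbC : ∀ l ∈ C, P {ω | τ*(1-δ) ≤ σhat l ω} ≤ EU := by
    intro l hl
    have hl1 := (Finset.mem_filter.1 hl).2
    refine le_trans (event_upper P n (hσsq l) (hdist l) hε0.le hε13 ?_) ?_
    · have h2 : σsq l * (1+ε) ≤ τ*(1-α)*(1+ε) :=
        mul_le_mul_of_nonneg_right hl1 (by linarith only [hε0])
      have h4 : (1-α)*(1+ε) ≤ 1-δ := by
        have h5 := mul_pos hε0 hα0
        have h6 : (1-α)*(1+ε) = 1 + ε - α - ε*α := by ring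
        linarith only [h5, h6, hεδ]
      have h3 : τ*(1-α)*(1+ε) ≤ τ*(1-δ) := by
        calc τ*(1-α)*(1+ε) = τ*((1-α)*(1+ε)) := by ring
          _ ≤ τ*(1-δ) := mul_le_mul_of_nonneg_left h4 hτ.le
      linarith only [h2, h3]
    · rw [hEUdef, hUb]
  have hbS : ∀ j ∈ S, P {ω | σhat j ω < τ*(1-δ)} ≤ EU := by
    intro j hj
    have hj1 := hS j hj
    refine le_trans (event_lower P n (hσsq j) (hdist j) hδ0.le
      (by linarith only [hδ12]) ?_) ?_
    · exact mul_le_mul_of_nonneg_right hj1 (by linarith only [hδ12])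
    · rw [hEUdef, hU4]
  -- combine
  have hPFI : P FI ≤ C.card • EU + S.card • EU :=
    le_trans (measure_mono hFIsub) (le_trans (measure_union_le _ _)
      (add_le_add (measure_biUnion_le_card_smul P C _ EU hbC)
        (measure_biUnion_le_card_smul P S _ EU hbS)))
  by_cases hA : A = ∅
  · have hFE0 : P FE = 0 := by
      have h1 : FE = ∅ := by
        rw [hFE, Set.eq_empty_iff_forall_notMem]
        rintro ω ⟨l, hl1, -⟩
        have hlA : l ∈ A := Finset.mem_filter.2 ⟨Finset.mem_univ _, hl1⟩
        simp [hA] at hlA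
      rw [h1, measure_empty]
    calc P (FE ∪ FI) ≤ P FE + P FI := measure_union_le _ _
      _ = P FI := by rw [hFE0, zero_add]
      _ ≤ C.card • EU + S.card • EU := hPFI
      _ ≤ ENNReal.ofReal ((p:ℝ) * ((n:ℝ)^(-b))) +
          ENNReal.ofReal (((k.1:ℝ)+1) * ((n:ℝ)^(-b))) := by
          apply add_le_add
          · exact smul_ofReal_le C.card hUnn (by exact_mod_cast hCcard)
          · exact smul_ofReal_le S.card hUnn (by rw [hScard]; push_cast; exact le_rfl)
      _ ≤ _ := by
          rw [← ENNReal.ofReal_add (by positivity) (by positivity)]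
          apply ENNReal.ofReal_le_ofReal
          have hterm : 0 ≤ ((k.1:ℝ)+1) * (n:ℝ)^(-(1-2*α)*b) := by positivity
          have hcount : (p:ℝ) + ((k.1:ℝ)+1) ≤ 2*(p:ℝ)*((k.1:ℝ)+1) := by
            have h5 := mul_le_mul_of_nonneg_left hk1R
              (by linarith only [hpR] : (0:ℝ) ≤ 2*(p:ℝ))
            linarith only [h5, hkpR]
          have h7 := mul_le_mul_of_nonneg_right hcount hUnn
          push_cast
          linarith only [h7, hterm]
  · have hk11 : 1 ≤ k.1 := by
      have h0 : 0 < A.card := Finset.card_pos.2 (Finset.nonempty_iff_ne_empty.2 hA)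
      omega
    have hPFE : P FE ≤ A.card • EL + B.card • EU :=
      le_trans (measure_mono hFEsub) (le_trans (measure_union_le _ _)
        (add_le_add (measure_biUnion_le_card_smul P A _ EL hbA)
          (measure_biUnion_le_card_smul P B _ EU hbB)))
    calc P (FE ∪ FI) ≤ P FE + P FI := measure_union_le _ _
      _ ≤ (A.card • EL + B.card • EU) + (C.card • EU + S.card • EU) := add_le_add hPFE hPFI
      _ ≤ (ENNReal.ofReal (((k.1:ℝ)+1) * ((n:ℝ)^(-(1-2*α)*b))) +
            ENNReal.ofReal ((p:ℝ) * ((n:ℝ)^(-b)))) +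
          (ENNReal.ofReal ((p:ℝ) * ((n:ℝ)^(-b))) +
            ENNReal.ofReal (((k.1:ℝ)+1) * ((n:ℝ)^(-b)))) := by
          apply add_le_add
          · apply add_le_add
            · refine smul_ofReal_le A.card hLnn ?_
              have h6 : (A.card:ℝ) ≤ (k.1:ℝ) := by exact_mod_cast hAcard
              linarith only [h6]
            · exact smul_ofReal_le B.card hUnn (by exact_mod_cast hBcard)
          · apply add_le_add
            · exact smul_ofReal_le C.card hUnn (by exact_mod_cast hCcard)
            · exact smul_ofReal_le S.card hUnn (by rw [hScard]; push_cast; exact le_rfl)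
      _ ≤ _ := by
          rw [← ENNReal.ofReal_add (by positivity) (by positivity),
            ← ENNReal.ofReal_add (by positivity) (by positivity),
            ← ENNReal.ofReal_add (by positivity) (by positivity)]
          apply ENNReal.ofReal_le_ofReal
          have hk11R : (1:ℝ) ≤ (k.1:ℝ) := by exact_mod_cast hk11
          have hcount : 2*(p:ℝ) + ((k.1:ℝ)+1) ≤ 2*(p:ℝ)*((k.1:ℝ)+1) := by
            have h5 := mul_le_mul_of_nonneg_left
              (show (2:ℝ) ≤ (k.1:ℝ)+1 by linarith only [hk11R])
              (by linarith only [hpR] : (0:ℝ) ≤ 2*(p:ℝ))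
            linarith only [h5, hkpR, hpR]
          have h7 := mul_le_mul_of_nonneg_right hcount hUnn
          push_cast
          linarith only [h7]

end
end

section
/- Let M be a nonzero symmetric p×p real matrix and let ξ be a principal eigenvector of M, i.e. a unit eigenvector whose eigenvalue has maximal absolute value (so that ‖Mξ‖ = ‖M‖₂). Then for any nonzero η ∈ ℝ^p with Mη ≠ 0, ∠(η, Mη) ≤ 3 ∠(η, ξ). -/
set_option maxHeartbeats 1000000

/-!
STATEMENT 7 (Johnstone–Lu, Lemma 1): If `ξ` is a principal eigenvector of a nonzero
symmetric matrix `M` (a unit eigenvector whose eigenvalue has maximal absolute value),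
then for any nonzero `η` with `Mη ≠ 0`, `∠(η, Mη) ≤ 3 ∠(η, ξ)`.
-/

noncomputable section

open scoped RealInnerProductSpace

/-- Euclidean norm of a vector in `ℝ^p`. -/
def vecNorm {p : ℕ} (x : Fin p → ℝ) : ℝ := Real.sqrt (∑ i, x i ^ 2)

/-- Angle `∠(ξ, η) = arccos(|ξᵀη| / (‖ξ‖‖η‖)) ∈ [0, π/2]` between two vectors. -/
def angle {p : ℕ} (ξ η : Fin p → ℝ) : ℝ :=
  Real.arccos (|∑ i, ξ i * η i| / (vecNorm ξ * vecNorm η))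

private lemma vecNorm_eq_norm {p : ℕ} (x : Fin p → ℝ) :
    vecNorm x = ‖(WithLp.equiv 2 (Fin p → ℝ)).symm x‖ := by
  rw [EuclideanSpace.norm_eq, vecNorm]
  congr 1
  refine Finset.sum_congr rfl fun i _ => ?_
  rw [Real.norm_eq_abs, sq_abs]
  rfl

private lemma inner_eq_sum {p : ℕ} (x y : EuclideanSpace ℝ (Fin p)) :
    ⟪x, y⟫ = ∑ i, x i * y i := by
  simp [PiLp.inner_apply, RCLike.inner_apply]; exact Finset.sum_congr rfl fun _ _ => mul_comm _ _

private lemma norm_sq_eq {p : ℕ} (x : EuclideanSpace ℝ (Fin p)) :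
    ‖x‖ ^ 2 = ∑ i, x i ^ 2 := by
  rw [EuclideanSpace.norm_eq, Real.sq_sqrt (by positivity)]
  simp [sq_abs]

private lemma arccos_le_arccos' {x y : ℝ} (h2 : x ≤ y) :
    Real.arccos y ≤ Real.arccos x := by
  unfold Real.arccos
  have := Real.monotone_arcsin h2
  linarith

private lemma key_bound {p : ℕ} (T : EuclideanSpace ℝ (Fin p) →ₗ[ℝ] EuclideanSpace ℝ (Fin p))
    (hsym : T.IsSymmetric) (lam : ℝ)
    (hmax : ∀ (μ : ℝ) (w : EuclideanSpace ℝ (Fin p)), w ≠ 0 → T w = μ • w → |μ| ≤ |lam|)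
    (v : EuclideanSpace ℝ (Fin p)) :
    ‖T v‖ ≤ |lam| * ‖v‖ := by
  have hdim : Module.finrank ℝ (EuclideanSpace ℝ (Fin p)) = p := finrank_euclideanSpace_fin
  set b := hsym.eigenvectorBasis hdim with hbdef
  set μ := hsym.eigenvalues hdim with hμdef
  have heigen : ∀ i, T (b i) = μ i • b i := fun i =>
    (hsym.hasEigenvector_eigenvectorBasis hdim i).apply_eq_smul
  have hble : ∀ i, |μ i| ≤ |lam| := fun i =>
    hmax _ (b i) (hsym.hasEigenvector_eigenvectorBasis hdim i).2 (heigen i)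
  have hrepr : ∀ (x : EuclideanSpace ℝ (Fin p)) i, b.repr (T x) i = μ i * b.repr x i := by
    intro x i
    rw [b.repr_apply_apply, b.repr_apply_apply, ← hsym (b i) x, heigen i,
      real_inner_smul_left]
  have e1 : ‖T v‖ ^ 2 = ∑ i, b.repr (T v) i ^ 2 := by
    rw [← b.repr.norm_map (T v), norm_sq_eq]
  have e2 : ‖v‖ ^ 2 = ∑ i, b.repr v i ^ 2 := by
    rw [← b.repr.norm_map v, norm_sq_eq]
  have h1 : ‖T v‖ ^ 2 ≤ (|lam| * ‖v‖) ^ 2 := by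
    rw [e1, mul_pow, sq_abs, e2]
    calc ∑ i, b.repr (T v) i ^ 2 = ∑ i, (μ i)^2 * b.repr v i ^ 2 := by
          refine Finset.sum_congr rfl fun i _ => ?_
          rw [hrepr]; ring
      _ ≤ ∑ i, lam ^ 2 * b.repr v i ^ 2 := by
          refine Finset.sum_le_sum fun i _ => ?_
          have h2 : μ i ^ 2 ≤ lam ^ 2 := by
            nlinarith [sq_abs (μ i), sq_abs lam,
              mul_self_le_mul_self (abs_nonneg (μ i)) (hble i)]
          nlinarith [sq_nonneg (b.repr v i)]
      _ = lam ^ 2 * ∑ i, b.repr v i ^ 2 := by rw [Finset.mul_sum]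
  nlinarith [norm_nonneg (T v), mul_nonneg (abs_nonneg lam) (norm_nonneg v)]

theorem angle_image_le_three_angle_eigvec
    {p : ℕ} (M : Matrix (Fin p) (Fin p) ℝ)
    (hsymm : M.IsSymm) (hM : M ≠ 0)
    (ξ : Fin p → ℝ) (hξ : vecNorm ξ = 1)
    -- `ξ` is an eigenvector whose eigenvalue has maximal absolute value
    (heig : ∃ lam : ℝ, M.mulVec ξ = lam • ξ ∧
      ∀ (μ : ℝ) (w : Fin p → ℝ), w ≠ 0 → M.mulVec w = μ • w → |μ| ≤ |lam|)
    (η : Fin p → ℝ) (hη : η ≠ 0) (hMη : M.mulVec η ≠ 0) :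
    angle η (M.mulVec η) ≤ 3 * angle η ξ := by
  obtain ⟨lam, hMξ, hmax⟩ := heig
  have hherm : M.IsHermitian := by
    rw [Matrix.IsHermitian]
    ext i j
    simp only [Matrix.conjTranspose_apply, RCLike.star_def, starRingEnd_apply, star_trivial]
    exact congrFun (congrFun hsymm i) j
  have hsym' : (Matrix.toEuclideanLin M).IsSymmetric :=
    Matrix.isHermitian_iff_isSymmetric.mp hherm
  set T := Matrix.toEuclideanLin M with hTdef
  set F := (WithLp.equiv 2 (Fin p → ℝ)).symm with hFdef
  have hTapp : ∀ x : Fin p → ℝ, T (F x) = F (M.mulVec x) := fun x =>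
    Matrix.toEuclideanLin_apply_piLp_toLp M x
  have hmax' : ∀ (μ : ℝ) (w : EuclideanSpace ℝ (Fin p)), w ≠ 0 → T w = μ • w → |μ| ≤ |lam| := by
    intro μ w hw hTw
    refine hmax μ (WithLp.equiv 2 (Fin p → ℝ) w) (fun h0 => hw ?_) ?_
    · simpa [hFdef] using congrArg F h0
    · have h1 : T (F (WithLp.equiv 2 (Fin p → ℝ) w)) = μ • w := by
        rw [hFdef, Equiv.symm_apply_apply]; exact hTw
      rw [hTapp] at h1
      simpa [hFdef, WithLp.ofLp_smul] using congrArg (WithLp.equiv 2 (Fin p → ℝ)) h1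
  have hbound : ∀ x : EuclideanSpace ℝ (Fin p), ‖T x‖ ≤ |lam| * ‖x‖ :=
    key_bound T hsym' lam hmax'
  set ξ' := F ξ with hξ'
  set η' := F η with hη'
  have hξ1 : ‖ξ'‖ = 1 := by rw [hξ', ← vecNorm_eq_norm]; exact hξ
  set n := ‖η'‖ with hn
  have hn0 : 0 < n := by
    rw [hn, norm_pos_iff]
    intro h0
    exact hη (by simpa [hη', hFdef] using congrArg (WithLp.equiv 2 (Fin p → ℝ)) h0)
  set a := ⟪ξ', η'⟫ with ha
  set v := η' - a • ξ' with hv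
  have hξv : ⟪ξ', v⟫ = 0 := by
    rw [hv, inner_sub_right, real_inner_smul_right, real_inner_self_eq_norm_sq, hξ1]
    ring
  have hvξ : ⟪v, ξ'⟫ = 0 := by rw [real_inner_comm]; exact hξv
  have hdecomp : η' = a • ξ' + v := by rw [hv]; abel
  have hTξ : T ξ' = lam • ξ' := by
    rw [hξ', hTapp, hMξ]
    simp [hFdef, WithLp.toLp_smul]
  have hTvξ : ⟪ξ', T v⟫ = 0 := by
    rw [← hsym' ξ' v, hTξ, real_inner_smul_left, hξv, mul_zero]
  have hsmulv : ⟪a • ξ', v⟫ = 0 := by rw [real_inner_smul_left, hξv, mul_zero]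
  have hpyth : n ^ 2 = a ^ 2 + ‖v‖ ^ 2 := by
    have h1 := norm_add_sq_real (a • ξ') v
    rw [← hdecomp, hsmulv, norm_smul, hξ1, mul_one, Real.norm_eq_abs] at h1
    rw [hn, h1, sq_abs]
    ring
  have hTη : T η' = (lam * a) • ξ' + T v := by
    rw [hdecomp, map_add, map_smul, hTξ, smul_smul, mul_comm a lam]
  have hinner : ⟪η', T η'⟫ = lam * a ^ 2 + ⟪v, T v⟫ := by
    rw [hTη, hdecomp]
    simp only [inner_add_left, inner_add_right, real_inner_smul_left, real_inner_smul_right,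
      real_inner_self_eq_norm_sq, hξ1, hξv, hvξ, hTvξ]
    ring
  set m := ‖T η'‖ with hm
  have hm0 : 0 < m := by
    rw [hm, norm_pos_iff, hη', hTapp]
    intro h0
    exact hMη (by simpa [hFdef] using congrArg (WithLp.equiv 2 (Fin p → ℝ)) h0)
  have hMv : ‖T v‖ ≤ |lam| * ‖v‖ := hbound v
  have hmle : m ≤ |lam| * n := by
    have hsmul2 : ⟪(lam * a) • ξ', T v⟫ = 0 := by
      rw [real_inner_smul_left, hTvξ, mul_zero]
    have h2 : m ^ 2 = (lam * a) ^ 2 + ‖T v‖ ^ 2 := by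
      rw [hm, hTη, norm_add_sq_real, hsmul2, norm_smul, hξ1, mul_one, Real.norm_eq_abs, sq_abs]
      ring
    nlinarith [norm_nonneg (T v), norm_nonneg v, mul_nonneg (abs_nonneg lam) hn0.le,
      sq_abs lam, abs_nonneg lam, sq_nonneg (‖T v‖ - |lam| * ‖v‖)]
  have hlam0 : 0 < |lam| := by
    rcases (abs_nonneg lam).lt_or_eq with h | h
    · exact h
    · exfalso; rw [← h, zero_mul] at hmle; linarith
  have hvTv : |⟪v, T v⟫| ≤ |lam| * ‖v‖ ^ 2 := by
    calc |⟪v, T v⟫| ≤ ‖v‖ * ‖T v‖ := abs_real_inner_le_norm v (T v)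
      _ ≤ ‖v‖ * (|lam| * ‖v‖) := mul_le_mul_of_nonneg_left hMv (norm_nonneg v)
      _ = |lam| * ‖v‖ ^ 2 := by ring
  -- rewrite the two angles
  have hsum1 : (∑ i, η i * ξ i) = a := by
    rw [ha, real_inner_comm, inner_eq_sum η' ξ']
    rfl
  have hangle1 : angle η ξ = Real.arccos (|a| / n) := by
    rw [angle, hξ, hsum1, vecNorm_eq_norm η, ← hη', ← hn, mul_one]
  have hTη'eq : T η' = F (M.mulVec η) := by rw [hη', hTapp]
  have hsum2 : (∑ i, η i * M.mulVec η i) = ⟪η', T η'⟫ := by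
    rw [inner_eq_sum η' (T η'), hTη'eq]
    rfl
  have hangle2 : angle η (M.mulVec η) =
      Real.arccos (|⟪η', T η'⟫| / (n * m)) := by
    rw [angle, hsum2, vecNorm_eq_norm η, ← hη', ← hn, vecNorm_eq_norm (M.mulVec η),
      ← hTη'eq, ← hm]
  set A := ⟪η', T η'⟫ with hA
  have habsle : |a| ≤ n := by
    have h1 := abs_real_inner_le_norm ξ' η'
    rwa [hξ1, one_mul, ← ha, ← hn] at h1
  set θ := Real.arccos (|a| / n) with hθ
  have hθ0 : 0 ≤ θ := Real.arccos_nonneg _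
  have hθhalf : θ ≤ Real.pi / 2 := Real.arccos_le_pi_div_two.mpr (by positivity)
  have hcosθ : Real.cos θ = |a| / n :=
    Real.cos_arccos (le_trans (by norm_num : (-1:ℝ) ≤ 0) (by positivity))
      ((div_le_one hn0).mpr habsle)
  rw [hangle1, hangle2]
  have key : Real.arccos (|A| / (n * m)) ≤ 2 * θ := by
    have h2θ : Real.arccos (Real.cos (2 * θ)) = 2 * θ :=
      Real.arccos_cos (by linarith) (by linarith)
    rw [← h2θ]
    apply arccos_le_arccos'
    have c2 : Real.cos (2 * θ) = (2 * a ^ 2 - n ^ 2) / n ^ 2 := by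
      rw [Real.cos_two_mul, hcosθ, div_pow, sq_abs]
      field_simp
    rw [c2]
    rcases le_or_gt (2 * a ^ 2 - n ^ 2) 0 with hc | hc
    · exact le_trans (div_nonpos_of_nonpos_of_nonneg hc (sq_nonneg n)) (by positivity)
    · have hAge : |lam| * (2 * a ^ 2 - n ^ 2) ≤ |A| := by
        have hs : ‖v‖ ^ 2 = n ^ 2 - a ^ 2 := by linarith
        have habs : |lam * a ^ 2| - |⟪v, T v⟫| ≤ |A| := by
          have h3 := abs_add_le (lam * a ^ 2 + ⟪v, T v⟫) (-⟪v, T v⟫)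
          simp only [add_neg_cancel_right, abs_neg] at h3
          rw [hinner]
          linarith
        rw [abs_mul, abs_of_nonneg (sq_nonneg a)] at habs
        nlinarith
      rw [div_le_div_iff₀ (by positivity) (by positivity)]
      nlinarith [mul_le_mul_of_nonneg_left hmle (mul_nonneg hn0.le hc.le),
        mul_le_mul_of_nonneg_right hAge (sq_nonneg n), mul_pos hn0 hm0]
  linarith

end
end

section
/- Let A and E be symmetric p×p real matrices with p ≥ 2. Let λ₁(A) ≥ λ₂(A) ≥ … denote the eigenvalues of A in decreasing order, let q₁ be a unit eigenvector of A for λ₁(A), and suppose the spectral gap δ = λ₁(A) − λ₂(A) is positive and ‖E‖₂ ≤ δ/5. If q̂₁ is a unit eigenvector of A + E with eigenvalue λ* satisfying q₁ᵀq̂₁ ≥ 1/√2, then λ* ≥ λ₁(A) − √2 ‖E‖₂ and λ* − λ₂(A+E) ≥ δ[1 − (1 + √2)/5] > 0; consequently λ* = λ₁(A+E), i.e. q̂₁ is a principal eigenvector of A + E. -/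
/-!
STATEMENT 11 (Johnstone–Lu, perturbation bound, after Golub–Van Loan Thm 8.1.10):
Let `A, E` be symmetric `p×p` matrices, `p ≥ 2`, `q₁` a unit eigenvector of `A` for
the largest eigenvalue `λ₁(A)`, `δ = λ₁(A) − λ₂(A) > 0`, `‖E‖₂ ≤ δ/5`. If `q̂₁` is a
unit eigenvector of `A + E` with eigenvalue `λ*` and `q₁ᵀq̂₁ ≥ 1/√2`, then
`λ* ≥ λ₁(A) − √2‖E‖₂`, `λ* − λ₂(A+E) ≥ δ[1 − (1 + √2)/5] > 0`, and consequently
`λ* = λ₁(A+E)`.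
-/

noncomputable section

/-- The matrix 2-norm (operator/spectral norm) `‖A‖₂ = sup{‖Ax‖₂ : ‖x‖₂ = 1}`. -/
def specNorm {p : ℕ} (A : Matrix (Fin p) (Fin p) ℝ) : ℝ :=
  sSup ((fun x => vecNorm (A.mulVec x)) '' {x | vecNorm x = 1})

/-- `eigDesc hA k` is the `(k+1)`-th largest eigenvalue `λ_{k+1}(A)` of the
symmetric (Hermitian) real matrix `A`. -/
def eigDesc {p : ℕ} {A : Matrix (Fin p) (Fin p) ℝ} (hA : A.IsHermitian) (k : Fin p) : ℝ :=
  ordDesc hA.eigenvalues k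

namespace PEPHelpers

open Matrix Finset

variable {p : ℕ}

lemma inner_euc (x y : EuclideanSpace ℝ (Fin p)) : (inner ℝ x y : ℝ) = ∑ i, x i * y i := by
  simp [PiLp.inner_apply, RCLike.inner_apply, mul_comm]

lemma dot_mulVec_symm {M : Matrix (Fin p) (Fin p) ℝ} (hM : M.IsHermitian) (x y : Fin p → ℝ) :
    x ⬝ᵥ (M *ᵥ y) = (M *ᵥ x) ⬝ᵥ y := by
  have hsym : ∀ i j, M i j = M j i := fun i j => by
    conv_lhs => rw [← hM.eq]
    simp [Matrix.conjTranspose_apply]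
  simp only [dotProduct, mulVec, Finset.mul_sum, Finset.sum_mul]
  rw [Finset.sum_comm]
  exact Finset.sum_congr rfl fun i _ => Finset.sum_congr rfl fun j _ => by
    rw [hsym i j]; ring

lemma abs_dot_le (x w : Fin p → ℝ) : |x ⬝ᵥ w| ≤ vecNorm x * vecNorm w := by
  have h := Finset.sum_mul_sq_le_sq_mul_sq Finset.univ x w
  have h2 : |x ⬝ᵥ w| = Real.sqrt ((∑ i, x i * w i) ^ 2) := by
    rw [Real.sqrt_sq_eq_abs]; rfl
  rw [h2, vecNorm, vecNorm, ← Real.sqrt_mul (by positivity)]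
  exact Real.sqrt_le_sqrt h

lemma sq_sum_of_vecNorm_one {x : Fin p → ℝ} (hx : vecNorm x = 1) : ∑ i, x i ^ 2 = 1 := by
  have h := congrArg (fun t => t ^ 2) hx
  simp only [vecNorm] at h
  rwa [Real.sq_sqrt (by positivity), one_pow] at h

lemma dot_repr {M : Matrix (Fin p) (Fin p) ℝ} (hM : M.IsHermitian)
    (x y : EuclideanSpace ℝ (Fin p)) :
    (x : Fin p → ℝ) ⬝ᵥ (y : Fin p → ℝ) =
      ∑ i, hM.eigenvectorBasis.repr x i * hM.eigenvectorBasis.repr y i := by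
  have h1 : (inner ℝ x y : ℝ) = inner ℝ (hM.eigenvectorBasis.repr x) (hM.eigenvectorBasis.repr y) :=
    (hM.eigenvectorBasis.repr.inner_map_map x y).symm
  rw [inner_euc, inner_euc] at h1
  exact h1

lemma repr_mulVec {M : Matrix (Fin p) (Fin p) ℝ} (hM : M.IsHermitian)
    (x : EuclideanSpace ℝ (Fin p)) (i : Fin p) :
    hM.eigenvectorBasis.repr (WithLp.toLp 2 (M *ᵥ x : Fin p → ℝ)) i
      = hM.eigenvalues i * hM.eigenvectorBasis.repr x i := by
  rw [OrthonormalBasis.repr_apply_apply, OrthonormalBasis.repr_apply_apply,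
    inner_euc, inner_euc]
  have h1 : ∑ k, (hM.eigenvectorBasis i : EuclideanSpace ℝ (Fin p)) k * (M *ᵥ x : Fin p → ℝ) k
      = (⇑(hM.eigenvectorBasis i) : Fin p → ℝ) ⬝ᵥ (M *ᵥ (x : Fin p → ℝ)) := rfl
  rw [h1, dot_mulVec_symm hM, hM.mulVec_eigenvectorBasis]
  simp only [dotProduct, Pi.smul_apply, smul_eq_mul, Finset.mul_sum]
  exact Finset.sum_congr rfl fun k _ => by
    ring

lemma quad_repr {M : Matrix (Fin p) (Fin p) ℝ} (hM : M.IsHermitian)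
    (x : EuclideanSpace ℝ (Fin p)) :
    (x : Fin p → ℝ) ⬝ᵥ (M *ᵥ (x : Fin p → ℝ)) =
      ∑ i, hM.eigenvalues i * hM.eigenvectorBasis.repr x i ^ 2 := by
  rw [dot_repr hM x (WithLp.toLp 2 (M *ᵥ x : Fin p → ℝ))]
  exact Finset.sum_congr rfl fun i _ => by rw [repr_mulVec hM x i]; ring

lemma eig_coeff {M : Matrix (Fin p) (Fin p) ℝ} (hM : M.IsHermitian)
    {x : EuclideanSpace ℝ (Fin p)} {t : ℝ} (hx : M *ᵥ (x : Fin p → ℝ) = t • (x : Fin p → ℝ))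
    (i : Fin p) :
    (hM.eigenvalues i - t) * hM.eigenvectorBasis.repr x i = 0 := by
  have h := repr_mulVec hM x i
  have h2 : hM.eigenvectorBasis.repr (WithLp.toLp 2 (M *ᵥ x : Fin p → ℝ)) i
      = t * hM.eigenvectorBasis.repr x i := by
    have h3 : (WithLp.toLp 2 (M *ᵥ (x : Fin p → ℝ)) : EuclideanSpace ℝ (Fin p)) = t • x := by
      rw [hx]; rfl
    rw [h3, _root_.map_smul]
    rfl
  rw [h2] at h
  linarith [h]

lemma le_ordDesc0 (a : Fin p → ℝ) (hp : 0 < p) (j : Fin p) : a j ≤ ordDesc a ⟨0, hp⟩ := by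
  have h := Tuple.monotone_sort a (a := (Tuple.sort a).symm j) (b := Fin.rev ⟨0, hp⟩)
    (by simp [Fin.le_def, Fin.val_rev]; omega)
  simpa [ordDesc] using h

lemma le_ordDesc1 (a : Fin p → ℝ) (hp : 2 ≤ p) (j : Fin p)
    (hj : j ≠ Tuple.sort a (Fin.rev ⟨0, lt_of_lt_of_le (by norm_num) hp⟩)) : a j ≤ ordDesc a ⟨1, lt_of_lt_of_le (by norm_num) hp⟩ := by
  have hne : (Tuple.sort a).symm j ≠ Fin.rev ⟨0, by omega⟩ := by
    intro h
    exact hj (by rw [← h]; simp)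
  have hlt : (Tuple.sort a).symm j ≤ Fin.rev ⟨1, by omega⟩ := by
    rw [Fin.ne_iff_vne] at hne
    simp only [Fin.val_rev] at hne
    have := ((Tuple.sort a).symm j).isLt
    simp [Fin.le_def, Fin.val_rev]
    omega
  have h := Tuple.monotone_sort a hlt
  simpa [ordDesc] using h

/-- Sum of a function vanishing off two distinct indices. -/
lemma sum_pair_support {i₀ i₁ : Fin p} (hne : i₀ ≠ i₁) (g : Fin p → ℝ)
    (hg : ∀ i, i ≠ i₀ → i ≠ i₁ → g i = 0) : ∑ i, g i = g i₀ + g i₁ := by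
  rw [← Finset.sum_subset (Finset.subset_univ ({i₀, i₁} : Finset (Fin p)))
    (fun i _ hi => by
      simp only [Finset.mem_insert, Finset.mem_singleton] at hi
      push_neg at hi
      exact hg i hi.1 hi.2)]
  exact Finset.sum_pair hne

end PEPHelpers


set_option maxHeartbeats 1000000 in
open PEPHelpers Matrix Finset in
theorem principal_eigenvector_perturbation
    {p : ℕ} (hp : 2 ≤ p)
    (A E : Matrix (Fin p) (Fin p) ℝ)
    (hA : A.IsHermitian) (hE : E.IsHermitian)
    -- `q₁` is a unit eigenvector of `A` for the largest eigenvalue `λ₁(A)`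
    (q₁ : Fin p → ℝ) (hq₁ : vecNorm q₁ = 1)
    (hq₁eig : A.mulVec q₁ = (eigDesc hA ⟨0, by omega⟩) • q₁)
    -- spectral gap `δ = λ₁(A) − λ₂(A)`
    (δ : ℝ) (hδ : δ = eigDesc hA ⟨0, by omega⟩ - eigDesc hA ⟨1, by omega⟩)
    (hδpos : 0 < δ) (hEnorm : specNorm E ≤ δ / 5)
    -- `q̂₁` is a unit eigenvector of `A + E` with eigenvalue `λ*`, `q₁ᵀq̂₁ ≥ 1/√2`
    (qhat₁ : Fin p → ℝ) (hqhat₁ : vecNorm qhat₁ = 1)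
    (lamstar : ℝ) (hqhat₁eig : (A + E).mulVec qhat₁ = lamstar • qhat₁)
    (hdot : 1 / Real.sqrt 2 ≤ ∑ i, q₁ i * qhat₁ i) :
    eigDesc hA ⟨0, by omega⟩ - Real.sqrt 2 * specNorm E ≤ lamstar ∧
    δ * (1 - (1 + Real.sqrt 2) / 5) ≤ lamstar - eigDesc (hA.add hE) ⟨1, by omega⟩ ∧
    0 < δ * (1 - (1 + Real.sqrt 2) / 5) ∧
    lamstar = eigDesc (hA.add hE) ⟨0, by omega⟩ := by
  classical
  have hp0 : 0 < p := by omega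
  set S := specNorm E with hSdef
  -- ## spectral norm facts
  have hbdd : BddAbove ((fun x => vecNorm (E.mulVec x)) '' {x | vecNorm x = 1}) := by
    refine ⟨Real.sqrt (∑ i, ∑ j, E i j ^ 2), ?_⟩
    rintro z ⟨x, hx, rfl⟩
    have hx2 : ∑ j, x j ^ 2 = 1 := sq_sum_of_vecNorm_one hx
    unfold vecNorm
    apply Real.sqrt_le_sqrt
    apply Finset.sum_le_sum
    intro i _
    have h := Finset.sum_mul_sq_le_sq_mul_sq Finset.univ (fun j => E i j) x
    rw [hx2, mul_one] at h
    exact h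
  have hunit : vecNorm (fun k : Fin p => if k = ⟨0, hp0⟩ then (1:ℝ) else 0) = 1 := by
    have h : (∑ i, (if i = (⟨0, hp0⟩ : Fin p) then (1:ℝ) else 0) ^ 2) = 1 := by
      simp [ite_pow, Finset.sum_ite_eq']
    unfold vecNorm
    rw [h, Real.sqrt_one]
  have hmem : ∀ y : Fin p → ℝ, vecNorm y = 1 → vecNorm (E.mulVec y) ≤ S :=
    fun y hy => le_csSup hbdd ⟨y, hy, rfl⟩
  have hS0 : 0 ≤ S := le_trans (Real.sqrt_nonneg _) (hmem _ hunit)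
  have hsdot : ∀ x y : Fin p → ℝ, vecNorm x = 1 → vecNorm y = 1 →
      |x ⬝ᵥ (E *ᵥ y)| ≤ S := by
    intro x y hx hy
    calc |x ⬝ᵥ (E *ᵥ y)| ≤ vecNorm x * vecNorm (E *ᵥ y) := abs_dot_le _ _
    _ = vecNorm (E *ᵥ y) := by rw [hx, one_mul]
    _ ≤ S := hmem y hy
  -- ## abbreviations
  set lam1 := eigDesc hA ⟨0, by omega⟩ with hlam1
  set lam2 := eigDesc hA ⟨1, by omega⟩ with hlam2
  set s2 := Real.sqrt 2 with hs2def
  have hs2sq : s2 ^ 2 = 2 := Real.sq_sqrt (by norm_num)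
  have hs2pos : 0 < s2 := Real.sqrt_pos.mpr (by norm_num)
  -- ## Part 1 : lam1 - √2 S ≤ lamstar
  have hd : 1 / s2 ≤ q₁ ⬝ᵥ qhat₁ := hdot
  have hdpos : 0 < q₁ ⬝ᵥ qhat₁ := lt_of_lt_of_le (by positivity) hd
  have hsplit : q₁ ⬝ᵥ ((A + E) *ᵥ qhat₁) = q₁ ⬝ᵥ (A *ᵥ qhat₁) + q₁ ⬝ᵥ (E *ᵥ qhat₁) := by
    rw [Matrix.add_mulVec, dotProduct_add]
  have h1 : q₁ ⬝ᵥ ((A + E) *ᵥ qhat₁) = lamstar * (q₁ ⬝ᵥ qhat₁) := by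
    rw [hqhat₁eig, dotProduct_smul]
    rfl
  have h2 : q₁ ⬝ᵥ (A *ᵥ qhat₁) = lam1 * (q₁ ⬝ᵥ qhat₁) := by
    rw [dot_mulVec_symm hA, hq₁eig, smul_dotProduct]
    rfl
  have hE1 : |q₁ ⬝ᵥ (E *ᵥ qhat₁)| ≤ S := hsdot q₁ qhat₁ hq₁ hqhat₁
  have heq : (lamstar - lam1) * (q₁ ⬝ᵥ qhat₁) = q₁ ⬝ᵥ (E *ᵥ qhat₁) := by
    have := h1
    rw [hsplit, h2] at this
    nlinarith [this]
  have goal1 : lam1 - s2 * S ≤ lamstar := by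
    rcases le_or_gt lam1 lamstar with h | h
    · nlinarith
    · have habs := (abs_le.mp hE1).1
      have h1d : 1 ≤ s2 * (q₁ ⬝ᵥ qhat₁) := by
        have := mul_le_mul_of_nonneg_left hd (le_of_lt hs2pos)
        rwa [mul_one_div, div_self (ne_of_gt hs2pos)] at this
      have h3 : (lam1 - lamstar) * (q₁ ⬝ᵥ qhat₁) ≤ S := by nlinarith
      have h4 : (lam1 - lamstar) * (s2 * (q₁ ⬝ᵥ qhat₁)) ≤ s2 * S := by nlinarith
      have h5 : lam1 - lamstar ≤ (lam1 - lamstar) * (s2 * (q₁ ⬝ᵥ qhat₁)) :=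
        le_mul_of_one_le_right (by linarith) h1d
      linarith
  -- ## Part 2 : Weyl-type bound  mu2 ≤ lam2 + S
  have hM : (A + E).IsHermitian := hA.add hE
  set μ := hM.eigenvalues with hμdef
  set ν := hA.eigenvalues with hνdef
  set i₀ := Tuple.sort μ (Fin.rev ⟨0, hp0⟩) with hi₀
  set i₁ := Tuple.sort μ (Fin.rev ⟨1, by omega⟩) with hi₁
  have hi01 : i₀ ≠ i₁ := by
    intro h
    have h' := (Tuple.sort μ).injective h
    rw [Fin.rev_inj] at h'
    have := congrArg Fin.val h'
    simp at this
  set j₀ := Tuple.sort ν (Fin.rev ⟨0, hp0⟩) with hj₀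
  -- components of q₁ in basis of M=A+E
  set α := hM.eigenvectorBasis.repr (WithLp.toLp 2 q₁ : EuclideanSpace ℝ (Fin p)) i₀ with hα
  set β := hM.eigenvectorBasis.repr (WithLp.toLp 2 q₁ : EuclideanSpace ℝ (Fin p)) i₁ with hβ
  have hkey : ∃ c₀ c₁ : ℝ, c₀ ^ 2 + c₁ ^ 2 = 1 ∧ c₀ * α + c₁ * β = 0 := by
    by_cases h0 : α = 0 ∧ β = 0
    · exact ⟨1, 0, by norm_num, by rw [h0.1, h0.2]; ring⟩
    · have hpos : 0 < α ^ 2 + β ^ 2 := by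
        rcases not_and_or.mp h0 with h' | h'
        · have := abs_pos.mpr h'
          nlinarith [sq_nonneg β, sq_abs α]
        · have := abs_pos.mpr h'
          nlinarith [sq_nonneg α, sq_abs β]
      set r := Real.sqrt (α ^ 2 + β ^ 2) with hrdef
      have hr : r ^ 2 = α ^ 2 + β ^ 2 := Real.sq_sqrt hpos.le
      have hrpos : 0 < r := Real.sqrt_pos.mpr hpos
      refine ⟨β / r, -α / r, ?_, by field_simp; ring⟩
      have : (β / r) ^ 2 + (-α / r) ^ 2 = (α ^ 2 + β ^ 2) / r ^ 2 := by ring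
      rw [this, hr, div_self (ne_of_gt hpos)]
  obtain ⟨c₀, c₁, hc1, hcorth⟩ := hkey
  set x : EuclideanSpace ℝ (Fin p) :=
    c₀ • hM.eigenvectorBasis i₀ + c₁ • hM.eigenvectorBasis i₁ with hxdef
  have hcx : ∀ i, hM.eigenvectorBasis.repr x i
      = (if i = i₀ then c₀ else 0) + (if i = i₁ then c₁ else 0) := by
    intro i
    rw [hxdef, map_add, _root_.map_smul, _root_.map_smul,
      OrthonormalBasis.repr_self, OrthonormalBasis.repr_self]
    simp [EuclideanSpace.single_apply]
  have hcx0 : ∀ i, i ≠ i₀ → i ≠ i₁ → hM.eigenvectorBasis.repr x i = 0 := by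
    intro i h0 h1
    rw [hcx i, if_neg h0, if_neg h1, add_zero]
  have hcxi₀ : hM.eigenvectorBasis.repr x i₀ = c₀ := by
    rw [hcx i₀, if_pos rfl, if_neg hi01, add_zero]
  have hcxi₁ : hM.eigenvectorBasis.repr x i₁ = c₁ := by
    rw [hcx i₁, if_neg (Ne.symm hi01), if_pos rfl, zero_add]
  -- x has unit norm
  have hxsum : ∑ i, (x : Fin p → ℝ) i ^ 2 = 1 := by
    have h := dot_repr hM x x
    have h2 : (x : Fin p → ℝ) ⬝ᵥ (x : Fin p → ℝ) = ∑ i, (x : Fin p → ℝ) i ^ 2 := by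
      simp [dotProduct, pow_two]
    rw [h2] at h
    rw [h, sum_pair_support hi01 _ (fun i hi0 hi1 => by rw [hcx0 i hi0 hi1]; ring),
      hcxi₀, hcxi₁]
    nlinarith [hc1]
  have hxnorm : vecNorm (x : Fin p → ℝ) = 1 := by
    unfold vecNorm
    rw [hxsum, Real.sqrt_one]
  -- x is orthogonal to q₁
  have hxq : q₁ ⬝ᵥ (x : Fin p → ℝ) = 0 := by
    rw [dot_repr hM (WithLp.toLp 2 q₁ : EuclideanSpace ℝ (Fin p)) x,
      sum_pair_support hi01 _ (fun i hi0 hi1 => by rw [hcx0 i hi0 hi1]; ring),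
      hcxi₀, hcxi₁, ← hα, ← hβ]
    nlinarith [hcorth]
  -- x ⬝ (A+E) x ≥ mu2
  have hmu01 : μ i₁ ≤ μ i₀ := le_ordDesc0 μ hp0 i₁
  have hxMx : eigDesc hM ⟨1, by omega⟩ ≤ (x : Fin p → ℝ) ⬝ᵥ ((A + E) *ᵥ (x : Fin p → ℝ)) := by
    rw [quad_repr hM x,
      sum_pair_support hi01 _ (fun i hi0 hi1 => by rw [hcx0 i hi0 hi1]; ring),
      hcxi₀, hcxi₁]
    have : eigDesc hM ⟨1, by omega⟩ = μ i₁ := rfl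
    rw [this, ← hμdef]
    have hmm : μ i₁ * (c₀ ^ 2 + c₁ ^ 2) = μ i₁ := by rw [hc1]; ring
    linarith [mul_le_mul_of_nonneg_right hmu01 (sq_nonneg c₀), hmm]
  -- x ⬝ A x ≤ lam2
  have hcq0 : ∀ k, k ≠ j₀ → hA.eigenvectorBasis.repr (WithLp.toLp 2 q₁ : EuclideanSpace ℝ (Fin p)) k = 0 := by
    intro k hk
    have h := eig_coeff hA (x := (WithLp.toLp 2 q₁ : EuclideanSpace ℝ (Fin p))) hq₁eig k
    have hlt : ν k < lam1 := by
      have := le_ordDesc1 ν hp k hk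
      rw [hδ] at hδpos
      calc ν k ≤ ordDesc ν ⟨1, by omega⟩ := this
      _ = lam2 := rfl
      _ < lam1 := by rw [hlam1, hlam2] at *; linarith
    have hne : ν k - lam1 ≠ 0 := by intro h'; linarith [hlt, sub_eq_zero.mp h']
    exact (mul_eq_zero.mp h).resolve_left hne
  have hq1sum : ∑ k, hA.eigenvectorBasis.repr (WithLp.toLp 2 q₁ : EuclideanSpace ℝ (Fin p)) k ^ 2 = 1 := by
    have h := dot_repr hA (WithLp.toLp 2 q₁ : EuclideanSpace ℝ (Fin p)) (WithLp.toLp 2 q₁ : EuclideanSpace ℝ (Fin p))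
    have h2 : q₁ ⬝ᵥ q₁ = ∑ i, q₁ i ^ 2 := by simp [dotProduct, pow_two]
    rw [h2, sq_sum_of_vecNorm_one hq₁] at h
    calc ∑ k, hA.eigenvectorBasis.repr (WithLp.toLp 2 q₁ : EuclideanSpace ℝ (Fin p)) k ^ 2
        = ∑ k, hA.eigenvectorBasis.repr (WithLp.toLp 2 q₁ : EuclideanSpace ℝ (Fin p)) k
            * hA.eigenvectorBasis.repr (WithLp.toLp 2 q₁ : EuclideanSpace ℝ (Fin p)) k :=
          Finset.sum_congr rfl fun k _ => pow_two _
    _ = 1 := h.symm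
  have hcqj : hA.eigenvectorBasis.repr (WithLp.toLp 2 q₁ : EuclideanSpace ℝ (Fin p)) j₀ ^ 2 = 1 := by
    rw [← hq1sum]
    rw [Finset.sum_eq_single j₀ (fun k _ hk => by rw [hcq0 k hk]; ring)
      (fun h => absurd (Finset.mem_univ _) h)]
  have hcvj : hA.eigenvectorBasis.repr x j₀ = 0 := by
    have h := dot_repr hA (WithLp.toLp 2 q₁ : EuclideanSpace ℝ (Fin p)) x
    rw [hxq] at h
    rw [Finset.sum_eq_single j₀ (fun k _ hk => by rw [hcq0 k hk]; ring)
      (fun h => absurd (Finset.mem_univ _) h)] at h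
    have hne : hA.eigenvectorBasis.repr (WithLp.toLp 2 q₁ : EuclideanSpace ℝ (Fin p)) j₀ ≠ 0 := by
      intro h'
      rw [h'] at hcqj
      norm_num at hcqj
    exact (mul_eq_zero.mp h.symm).resolve_left hne
  have hxsum' : ∑ k, hA.eigenvectorBasis.repr x k ^ 2 = 1 := by
    have h := dot_repr hA x x
    have h2 : (x : Fin p → ℝ) ⬝ᵥ (x : Fin p → ℝ) = ∑ i, (x : Fin p → ℝ) i ^ 2 := by
      simp [dotProduct, pow_two]
    rw [h2, hxsum] at h
    calc ∑ k, hA.eigenvectorBasis.repr x k ^ 2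
        = ∑ k, hA.eigenvectorBasis.repr x k
            * hA.eigenvectorBasis.repr x k :=
          Finset.sum_congr rfl fun k _ => pow_two _
    _ = 1 := h.symm
  have hxAx : (x : Fin p → ℝ) ⬝ᵥ (A *ᵥ (x : Fin p → ℝ)) ≤ lam2 := by
    rw [quad_repr hA x]
    calc ∑ k, ν k * hA.eigenvectorBasis.repr x k ^ 2
        ≤ ∑ k, lam2 * hA.eigenvectorBasis.repr x k ^ 2 := by
          apply Finset.sum_le_sum
          intro k _
          by_cases hk : k = j₀
          · rw [hk, hcvj]; ring_nf; exact le_refl _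
          · exact mul_le_mul_of_nonneg_right (le_ordDesc1 ν hp k hk) (sq_nonneg _)
    _ = lam2 * ∑ k, hA.eigenvectorBasis.repr x k ^ 2 := by rw [Finset.mul_sum]
    _ = lam2 := by rw [hxsum', mul_one]
  have hxEx : (x : Fin p → ℝ) ⬝ᵥ (E *ᵥ (x : Fin p → ℝ)) ≤ S :=
    le_trans (le_abs_self _) (hsdot _ _ hxnorm hxnorm)
  have hweyl : eigDesc hM ⟨1, by omega⟩ ≤ lam2 + S := by
    have hsplit2 : (x : Fin p → ℝ) ⬝ᵥ ((A + E) *ᵥ (x : Fin p → ℝ))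
        = (x : Fin p → ℝ) ⬝ᵥ (A *ᵥ (x : Fin p → ℝ))
          + (x : Fin p → ℝ) ⬝ᵥ (E *ᵥ (x : Fin p → ℝ)) := by
      rw [Matrix.add_mulVec, dotProduct_add]
    have h := hxMx
    rw [hsplit2] at h
    linarith [h, hxAx, hxEx]
  -- ## Part 2 conclusion
  have hs2lt : s2 < 2 := by nlinarith [hs2sq, hs2pos]
  have goal2 : δ * (1 - (1 + s2) / 5) ≤ lamstar - eigDesc (hA.add hE) ⟨1, by omega⟩ := by
    have hmul : (1 + s2) * S ≤ (1 + s2) * (δ / 5) :=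
      mul_le_mul_of_nonneg_left hEnorm (by positivity)
    have hexp : δ * (1 - (1 + s2) / 5) = δ - (1 + s2) * (δ / 5) := by ring
    have hw : eigDesc (hA.add hE) ⟨1, by omega⟩ ≤ lam2 + S := hweyl
    rw [hexp]
    linarith [goal1, hw, hmul]
  -- ## Part 3 : positivity
  have goal3 : 0 < δ * (1 - (1 + s2) / 5) := by
    apply mul_pos hδpos
    linarith [hs2lt]
  -- ## Part 4 : lamstar is the top eigenvalue
  have goal4 : lamstar = eigDesc (hA.add hE) ⟨0, by omega⟩ := by
    have hqsum : ∑ k, hM.eigenvectorBasis.repr (WithLp.toLp 2 qhat₁ : EuclideanSpace ℝ (Fin p)) k ^ 2 = 1 := by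
      have h := dot_repr hM (WithLp.toLp 2 qhat₁ : EuclideanSpace ℝ (Fin p)) (WithLp.toLp 2 qhat₁ : EuclideanSpace ℝ (Fin p))
      have h2 : qhat₁ ⬝ᵥ qhat₁ = ∑ i, qhat₁ i ^ 2 := by simp [dotProduct, pow_two]
      rw [h2, sq_sum_of_vecNorm_one hqhat₁] at h
      calc ∑ k, hM.eigenvectorBasis.repr (WithLp.toLp 2 qhat₁ : EuclideanSpace ℝ (Fin p)) k ^ 2
          = ∑ k, hM.eigenvectorBasis.repr (WithLp.toLp 2 qhat₁ : EuclideanSpace ℝ (Fin p)) k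
              * hM.eigenvectorBasis.repr (WithLp.toLp 2 qhat₁ : EuclideanSpace ℝ (Fin p)) k :=
            Finset.sum_congr rfl fun k _ => pow_two _
      _ = 1 := h.symm
    have hex : ∃ k, hM.eigenvectorBasis.repr (WithLp.toLp 2 qhat₁ : EuclideanSpace ℝ (Fin p)) k ≠ 0 := by
      by_contra hall
      push_neg at hall
      rw [Finset.sum_eq_zero (fun k _ => by rw [hall k]; ring)] at hqsum
      norm_num at hqsum
    obtain ⟨k, hk⟩ := hex
    have h := eig_coeff hM (x := (WithLp.toLp 2 qhat₁ : EuclideanSpace ℝ (Fin p))) hqhat₁eig k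
    have hμk : μ k = lamstar := by
      have h' := (mul_eq_zero.mp h).resolve_right hk
      have := sub_eq_zero.mp h'
      rw [← hμdef] at this
      linarith [this]
    by_cases hk0 : k = i₀
    · rw [← hμk, hk0]
      rfl
    · exfalso
      have hle : μ k ≤ eigDesc hM ⟨1, by omega⟩ := le_ordDesc1 μ hp k hk0
      have hpos2 : 0 < lamstar - eigDesc (hA.add hE) ⟨1, by omega⟩ := lt_of_lt_of_le goal3 goal2
      rw [hμk] at hle
      have h2 : eigDesc hM ⟨1, by omega⟩ = eigDesc (hA.add hE) ⟨1, by omega⟩ := rfl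
      rw [h2] at hle
      linarith [hle, hpos2]
  exact ⟨goal1, goal2, goal3, goal4⟩

end
end
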